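/- Let p̄ > 0 and θ₁, θ₂ ∈ ℝ with θ₁θ₂ = 6(1 + 2p̄). Define y(t) := (θ₂/6)e^t, w(t, x) := e^t·x(x − 1), K(x, η) := ((x² − x − 2p̄)/(1 + 2p̄))·η, and L(v) := −∫₀¹ v(x) dx. Then: (i) |K(x, η)| ≤ |η| for all x ∈ [0, 1] and η ∈ ℝ; (ii) |L(v)| ≤ (∫₀¹ v(x)² dx)^{1/2} for every square-integrable v : [0, 1] → ℝ; (iii) for all t ≥ 0 and x ∈ [0, 1]: ∂w/∂t(t, x) = p̄·∂²w/∂x²(t, x) + θ₁·K(x, y(t)), w(t, 0) = w(t, 1) = 0, and y'(t) = θ₂·L(w(t, ·)). -/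

import Mathlib

open MeasureTheory

lemma cs_aux (v : ℝ → ℝ) (hv : MemLp v 2 (volume.restrict (Set.Icc (0 : ℝ) 1))) :
    |∫ x in (0 : ℝ)..1, v x| ≤ Real.sqrt (∫ x in (0 : ℝ)..1, (v x) ^ 2) := by
  set μ := volume.restrict (Set.Icc (0 : ℝ) 1) with hμ
  haveI : IsFiniteMeasure μ := by
    constructor
    rw [hμ, Measure.restrict_apply MeasurableSet.univ, Set.univ_inter, Real.volume_Icc]
    norm_num
  have hμuniv : (μ Set.univ).toReal = 1 := by
    rw [hμ, Measure.restrict_apply MeasurableSet.univ, Set.univ_inter, Real.volume_Icc]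
    norm_num
  have hint : Integrable v μ := hv.integrable (by norm_num)
  have hint2 : Integrable (fun x => v x ^ 2) μ := hv.integrable_sq
  set I := ∫ x, v x ∂μ with hI
  set S := ∫ x, v x ^ 2 ∂μ with hS
  have key : I ^ 2 ≤ S := by
    have h0 : 0 ≤ ∫ x, (v x - I) ^ 2 ∂μ :=
      integral_nonneg fun x => sq_nonneg _
    have hexp : ∀ x : ℝ, (v x - I) ^ 2 = v x ^ 2 - (2 * I) * v x + I ^ 2 := by
      intro x; ring
    have hintc : Integrable (fun _ : ℝ => I ^ 2) μ := integrable_const _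
    have h1 : Integrable (fun x => v x ^ 2 - (2 * I) * v x) μ :=
      hint2.sub (hint.const_mul _)
    have heq : ∫ x, (v x - I) ^ 2 ∂μ = S - (2 * I) * I + I ^ 2 * (μ Set.univ).toReal := by
      simp_rw [hexp]
      rw [integral_add h1 hintc, integral_sub hint2 (hint.const_mul _),
        integral_const, integral_const_mul, smul_eq_mul]
      rw [measureReal_def, ← hS, ← hI]
      ring
    rw [heq, hμuniv] at h0
    nlinarith
  have hIcc_Ioc : ∀ g : ℝ → ℝ, (∫ x in (0:ℝ)..1, g x) = ∫ x, g x ∂μ := by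
    intro g
    rw [intervalIntegral.integral_of_le (by norm_num : (0:ℝ) ≤ 1), hμ,
      ← MeasureTheory.integral_Icc_eq_integral_Ioc]
  rw [hIcc_Ioc v, hIcc_Ioc (fun x => v x ^ 2)]
  calc |I| = Real.sqrt (I ^ 2) := (Real.sqrt_sq_eq_abs I).symm
    _ ≤ Real.sqrt S := Real.sqrt_le_sqrt key

/-- The open-loop instability example for Case A (heat PDE): with
`θ₁θ₂ = 6(1 + 2p̄)`, `y(t) = (θ₂/6)e^t`, `w(t,x) = e^t x(x−1)`,
`K(x,η) = ((x² − x − 2p̄)/(1 + 2p̄))η` and `L(v) = −∫₀¹ v`, the structural bounds (4.2)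
hold and `(y, w)` is an exponentially growing solution of the open-loop system (4.1). -/
theorem heat_open_loop_instability_example (pbar θ₁ θ₂ : ℝ) (hpbar : 0 < pbar)
    (hθ : θ₁ * θ₂ = 6 * (1 + 2 * pbar))
    (y : ℝ → ℝ) (w : ℝ → ℝ → ℝ) (K : ℝ → ℝ → ℝ) (L : (ℝ → ℝ) → ℝ)
    (hy : ∀ t, y t = (θ₂ / 6) * Real.exp t)
    (hw : ∀ t x, w t x = Real.exp t * (x * (x - 1)))
    (hK : ∀ x η, K x η = ((x ^ 2 - x - 2 * pbar) / (1 + 2 * pbar)) * η)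
    (hL : ∀ v, L v = -∫ x in (0 : ℝ)..1, v x) :
    (∀ x ∈ Set.Icc (0 : ℝ) 1, ∀ η : ℝ, |K x η| ≤ |η|) ∧
    (∀ v : ℝ → ℝ, MemLp v 2 (volume.restrict (Set.Icc (0 : ℝ) 1)) →
      |L v| ≤ Real.sqrt (∫ x in (0 : ℝ)..1, (v x) ^ 2)) ∧
    (∀ t, 0 ≤ t → ∀ x ∈ Set.Icc (0 : ℝ) 1,
      deriv (fun s => w s x) t = pbar * deriv (deriv (w t)) x + θ₁ * K x (y t) ∧
      w t 0 = 0 ∧ w t 1 = 0 ∧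
      deriv y t = θ₂ * L (w t)) := by
  refine ⟨?_, ?_, ?_⟩
  · -- (i)
    intro x hx η
    rw [hK, abs_mul]
    have h1 : |((x ^ 2 - x - 2 * pbar) / (1 + 2 * pbar))| ≤ 1 := by
      rw [abs_div, abs_of_pos (by linarith : (0:ℝ) < 1 + 2 * pbar)]
      rw [div_le_one (by linarith)]
      obtain ⟨hx0, hx1⟩ := hx
      rw [abs_le]
      constructor <;> nlinarith
    calc |((x ^ 2 - x - 2 * pbar) / (1 + 2 * pbar))| * |η| ≤ 1 * |η| :=
          mul_le_mul_of_nonneg_right h1 (abs_nonneg η)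
      _ = |η| := one_mul _
  · -- (ii)
    intro v hv
    rw [hL, abs_neg]
    exact cs_aux v hv
  · -- (iii)
    intro t _ x _
    have hwt : w t = fun x => Real.exp t * (x * (x - 1)) := funext fun x => hw t x
    have hd1 : deriv (w t) = fun x => Real.exp t * (2 * x - 1) := by
      funext z
      rw [hwt]
      have : HasDerivAt (fun x : ℝ => Real.exp t * (x * (x - 1)))
          (Real.exp t * (2 * z - 1)) z := by
        have h := ((hasDerivAt_id z).mul ((hasDerivAt_id z).sub_const 1)).const_mul
          (Real.exp t)
        refine h.congr_deriv ?_
        simp only [id]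
        ring
      exact this.deriv
    have hd2 : deriv (deriv (w t)) x = Real.exp t * 2 := by
      rw [hd1]
      have : HasDerivAt (fun z : ℝ => Real.exp t * (2 * z - 1))
          (Real.exp t * 2) x := by
        have h := (((hasDerivAt_id x).const_mul (2:ℝ)).sub_const 1).const_mul (Real.exp t)
        refine h.congr_deriv ?_
        ring
      exact this.deriv
    have hdt : deriv (fun s => w s x) t = Real.exp t * (x * (x - 1)) := by
      have : (fun s => w s x) = fun s => Real.exp t * 0 + Real.exp s * (x * (x - 1)) := by
        funext s; rw [hw]; ring
      simp only [hw]
      have h := (Real.hasDerivAt_exp t).mul_const (x * (x - 1))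
      exact h.deriv
    refine ⟨?_, ?_, ?_, ?_⟩
    · rw [hdt, hd2, hK, hy]
      have hpos : (1 : ℝ) + 2 * pbar ≠ 0 := by linarith
      have key : θ₁ * ((x ^ 2 - x - 2 * pbar) / (1 + 2 * pbar) * (θ₂ / 6 * Real.exp t))
          = (x ^ 2 - x - 2 * pbar) * Real.exp t := by
        field_simp
        linear_combination (x ^ 2 - x - 2 * pbar) * hθ
      rw [key]
      ring
    · rw [hw]; ring
    · rw [hw]; ring
    · have hdy : deriv y t = θ₂ / 6 * Real.exp t := by
        have : y = fun s => θ₂ / 6 * Real.exp s := funext hy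
        rw [this]
        exact ((Real.hasDerivAt_exp t).const_mul _).deriv
      rw [hdy, hL]
      have hintw : (∫ x in (0:ℝ)..1, w t x) = -(Real.exp t / 6) := by
        simp_rw [hw]
        rw [intervalIntegral.integral_const_mul]
        have : (∫ x in (0:ℝ)..1, x * (x - 1)) = ∫ x in (0:ℝ)..1, (x ^ 2 - x) := by
          congr 1; funext x; ring
        have ha : IntervalIntegrable (fun x : ℝ => x ^ 2) volume 0 1 :=
          (continuous_pow 2).intervalIntegrable 0 1
        have hb : IntervalIntegrable (fun x : ℝ => x) volume 0 1 :=
          continuous_id.intervalIntegrable 0 1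
        rw [this, intervalIntegral.integral_sub ha hb]
        simp [integral_id]
        ring
      rw [hintw]
      ring
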